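/- Strong duality holds between the Graph-Slope primal problem min_{β ∈ ℝⁿ} (1/2)‖y − β‖² + ‖Dᵀβ‖_Λ and the dual problem min_{θ ∈ ℝ^p : ‖θ‖* ≤ 1} (1/2)‖Dθ − y‖² − (1/2)‖y‖²: if θ̂ minimizes (1/2)‖Dθ − y‖² over {θ : ‖θ‖* ≤ 1}, then β̂ := y − Dθ̂ minimizes the primal objective, and the duality gap at (β̂, θ̂) vanishes, i.e., (1/2)‖y − β̂‖² + ‖Dᵀβ̂‖_Λ + (1/2)‖Dθ̂ − y‖² − (1/2)‖y‖² = 0. -/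

import Mathlib

open MeasureTheory ProbabilityTheory Matrix

/-- The non-increasing rearrangement of the amplitudes `(|θ 1|, …, |θ p|)`. -/
noncomputable def dsort {p : ℕ} (θ : Fin p → ℝ) : Fin p → ℝ :=
  fun j => |θ (Tuple.sort (fun i => |θ i|) j.rev)|

/-- The ordered ℓ1 (Slope) norm `‖θ‖_Λ = ∑ j, λ_j |θ|^↓_j`. -/
noncomputable def slopeNorm {p : ℕ} (lam θ : Fin p → ℝ) : ℝ :=
  ∑ j, lam j * dsort θ j

/-- The dual norm of the Slope norm: `‖v‖* = sup_{‖θ‖_Λ ≤ 1} ⟨v, θ⟩`. -/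
noncomputable def dualSlopeNorm {p : ℕ} (lam v : Fin p → ℝ) : ℝ :=
  sSup {x : ℝ | ∃ θ : Fin p → ℝ, slopeNorm lam θ ≤ 1 ∧ x = ∑ j, v j * θ j}

/-- Euclidean norm of a vector. -/
noncomputable def enorm2 {n : ℕ} (v : Fin n → ℝ) : ℝ :=
  Real.sqrt (∑ i, (v i) ^ 2)

/-- Number of nonzero entries. -/
noncomputable def l0 {p : ℕ} (u : Fin p → ℝ) : ℕ := Set.ncard {j | u j ≠ 0}

/-- `Λ(λ, s) = (∑_{j=1}^s λ_j²)^{1/2}` (with 0-based indexing: `j < s`). -/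
noncomputable def LamS {p : ℕ} (lam : Fin p → ℝ) (s : ℕ) : ℝ :=
  Real.sqrt (∑ j ∈ Finset.univ.filter (fun j : Fin p => (j : ℕ) < s), (lam j) ^ 2)

/-- `∑_{j=1}^s λ_j |u|^↓_j` (0-based: indices `j < s`). -/
noncomputable def headSum {p : ℕ} (lam : Fin p → ℝ) (s : ℕ) (u : Fin p → ℝ) : ℝ :=
  ∑ j ∈ Finset.univ.filter (fun j : Fin p => (j : ℕ) < s), lam j * dsort u j

/-- `∑_{j=s+1}^p λ_j |u|^↓_j` (0-based: indices `s ≤ j`). -/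
noncomputable def tailSum {p : ℕ} (lam : Fin p → ℝ) (s : ℕ) (u : Fin p → ℝ) : ℝ :=
  ∑ j ∈ Finset.univ.filter (fun j : Fin p => s ≤ (j : ℕ)), lam j * dsort u j

/-- An undirected graph on the vertex set `[n]` with `p` (distinct) edges,
each edge recorded as an ordered pair `(min, max)`. -/
structure GraphOn (n p : ℕ) where
  edge : Fin p → Fin n × Fin n
  lt : ∀ e, (edge e).1 < (edge e).2
  inj : Function.Injective edge

/-- The edge-vertex incidence matrix `Dᵀ ∈ ℝ^{p × n}`:
`(Dᵀ)_{e,v} = +1` if `v = min(i,j)`, `-1` if `v = max(i,j)`, `0` otherwise. -/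
def GraphOn.incT {n p : ℕ} (G : GraphOn n p) : Matrix (Fin p) (Fin n) ℝ :=
  Matrix.of fun e v =>
    if v = (G.edge e).1 then 1 else if v = (G.edge e).2 then -1 else 0

/-- The simple graph associated to a `GraphOn`. -/
def GraphOn.toSimpleGraph {n p : ℕ} (G : GraphOn n p) : SimpleGraph (Fin n) :=
  SimpleGraph.fromRel fun i j => ∃ e, G.edge e = (i, j)

/-- The compatibility factor `κ(s)`. -/
noncomputable def kappa {n p : ℕ} (G : GraphOn n p) (lam : Fin p → ℝ) (s : ℕ) : ℝ :=
  sInf ((fun v : Fin n → ℝ => enorm2 v / enorm2 (G.incT.mulVec v)) ''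
    {v : Fin n → ℝ |
      3 * LamS lam s * enorm2 (G.incT.mulVec v) > tailSum lam s (G.incT.mulVec v)})

/-- The four Penrose conditions: `B` is the Moore–Penrose pseudo-inverse of `A`. -/
def IsMoorePenrose {m k : ℕ} (A : Matrix (Fin m) (Fin k) ℝ)
    (B : Matrix (Fin k) (Fin m) ℝ) : Prop :=
  A * B * A = A ∧ B * A * B = B ∧ (A * B)ᵀ = A * B ∧ (B * A)ᵀ = B * A

/-- `ρ(G) = max_j ‖(Dᵀ)† e_j‖₂`, where `B = (Dᵀ)†`. -/
noncomputable def rhoG {n p : ℕ} (B : Matrix (Fin n) (Fin p) ℝ) : ℝ :=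
  ⨆ j : Fin p, enorm2 (fun i => B i j)

/-- `P` is the matrix of the orthogonal (Euclidean) projection onto `ker Dᵀ`:
symmetric, idempotent, range contained in the kernel, fixing the kernel. -/
def IsOrthProjKer {n p : ℕ} (G : GraphOn n p) (P : Matrix (Fin n) (Fin n) ℝ) : Prop :=
  Pᵀ = P ∧ P * P = P ∧ (∀ v : Fin n → ℝ, G.incT.mulVec (P.mulVec v) = 0) ∧
    ∀ v : Fin n → ℝ, G.incT.mulVec v = 0 → P.mulVec v = v

/-- The Graph-Slope objective `β ↦ (1/(2n))‖y - β‖² + ‖Dᵀβ‖_Λ`. -/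
noncomputable def gslopeObj {n p : ℕ} (G : GraphOn n p) (lam : Fin p → ℝ)
    (y β : Fin n → ℝ) : ℝ :=
  (1 / (2 * (n : ℝ))) * (enorm2 (y - β)) ^ 2 + slopeNorm lam (G.incT.mulVec β)

noncomputable def tauPerm {p : ℕ} (v : Fin p → ℝ) : Equiv.Perm (Fin p) :=
  (Fin.revPerm).trans (Tuple.sort (fun i => |v i|))

lemma dsort_eq_tau {p : ℕ} (v : Fin p → ℝ) (j : Fin p) :
    dsort v j = |v (tauPerm v j)| := rfl

lemma dsort_nonneg {p : ℕ} (v : Fin p → ℝ) (j : Fin p) : 0 ≤ dsort v j :=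
  abs_nonneg _

lemma dsort_antitone {p : ℕ} (v : Fin p → ℝ) : Antitone (dsort v) := by
  intro j k hjk
  exact Tuple.monotone_sort (fun i => |v i|) (Fin.rev_le_rev.2 hjk)

lemma key_rearr {p : ℕ} (lam : Fin p → ℝ) (hmono : Antitone lam) (v : Fin p → ℝ)
    (π : Equiv.Perm (Fin p)) : ∑ j, lam j * |v (π j)| ≤ slopeNorm lam v := by
  have hM : Monovary lam (dsort v) := by
    intro i j hij
    rcases le_or_gt i j with h | h
    · exact absurd (dsort_antitone v h) (not_le.2 hij)
    · exact hmono h.le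
  have h := hM.sum_smul_comp_perm_le_sum_smul (σ := π.trans (tauPerm v).symm)
  simp only [smul_eq_mul, Equiv.trans_apply] at h
  calc ∑ j, lam j * |v (π j)|
      = ∑ j, lam j * dsort v ((tauPerm v).symm (π j)) := by
        apply Finset.sum_congr rfl; intro j _
        rw [dsort_eq_tau, Equiv.apply_symm_apply]
    _ ≤ ∑ j, lam j * dsort v j := h
    _ = slopeNorm lam v := rfl

lemma slope_nonneg {p : ℕ} (lam : Fin p → ℝ) (hnonneg : ∀ j, 0 ≤ lam j) (v : Fin p → ℝ) :
    0 ≤ slopeNorm lam v :=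
  Finset.sum_nonneg fun j _ => mul_nonneg (hnonneg j) (dsort_nonneg v j)

lemma slope_smul {p : ℕ} (lam : Fin p → ℝ) (hmono : Antitone lam) {c : ℝ} (hc : 0 < c)
    (v : Fin p → ℝ) : slopeNorm lam (c • v) = c * slopeNorm lam v := by
  apply le_antisymm
  · have h1 : slopeNorm lam (c • v) = ∑ j, lam j * (c * |v (tauPerm (c • v) j)|) := by
      apply Finset.sum_congr rfl; intro j _
      rw [dsort_eq_tau]
      simp [abs_mul, abs_of_pos hc]
    rw [h1]
    calc ∑ j, lam j * (c * |v (tauPerm (c • v) j)|)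
        = c * ∑ j, lam j * |v (tauPerm (c • v) j)| := by
          rw [Finset.mul_sum]; apply Finset.sum_congr rfl; intros; ring
      _ ≤ c * slopeNorm lam v :=
          mul_le_mul_of_nonneg_left (key_rearr lam hmono v _) hc.le
  · have h2 : c * slopeNorm lam v = ∑ j, lam j * |(c • v) (tauPerm v j)| := by
      simp only [slopeNorm, Finset.mul_sum]
      apply Finset.sum_congr rfl; intro j _
      rw [dsort_eq_tau]
      simp [abs_mul, abs_of_pos hc]
      ring
    rw [h2]
    exact key_rearr lam hmono (c • v) _

lemma abs_le_dsort_zero {p : ℕ} (hp : 0 < p) (v : Fin p → ℝ) (i : Fin p) :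
    |v i| ≤ dsort v ⟨0, hp⟩ := by
  obtain ⟨k, hk⟩ := (Tuple.sort (fun i => |v i|)).surjective i
  have hle : k ≤ (⟨0, hp⟩ : Fin p).rev := by
    rw [Fin.le_def]
    have := k.isLt
    simp [Fin.val_rev]
    omega
  have := Tuple.monotone_sort (fun i => |v i|) hle
  simpa [dsort, hk] using this

lemma dual_set_bddAbove {p : ℕ} (hp : 0 < p) (lam : Fin p → ℝ) (hnonneg : ∀ j, 0 ≤ lam j)
    (hlam0 : 0 < lam ⟨0, hp⟩) (θ : Fin p → ℝ) :
    BddAbove {x : ℝ | ∃ u : Fin p → ℝ, slopeNorm lam u ≤ 1 ∧ x = ∑ j, θ j * u j} := by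
  refine ⟨(∑ j, |θ j|) * (lam ⟨0, hp⟩)⁻¹, ?_⟩
  rintro x ⟨u, hu, rfl⟩
  have hd0 : dsort u ⟨0, hp⟩ ≤ (lam ⟨0, hp⟩)⁻¹ := by
    have h1 : lam ⟨0, hp⟩ * dsort u ⟨0, hp⟩ ≤ slopeNorm lam u :=
      Finset.single_le_sum (f := fun j => lam j * dsort u j)
        (fun j _ => mul_nonneg (hnonneg j) (dsort_nonneg u j)) (Finset.mem_univ _)
    rw [inv_eq_one_div, le_div_iff₀ hlam0]
    nlinarith
  calc ∑ j, θ j * u j ≤ ∑ j, |θ j| * (lam ⟨0, hp⟩)⁻¹ := by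
        apply Finset.sum_le_sum; intro j _
        calc θ j * u j ≤ |θ j * u j| := le_abs_self _
          _ = |θ j| * |u j| := abs_mul _ _
          _ ≤ |θ j| * (lam ⟨0, hp⟩)⁻¹ :=
            mul_le_mul_of_nonneg_left ((abs_le_dsort_zero hp u j).trans hd0) (abs_nonneg _)
    _ = (∑ j, |θ j|) * (lam ⟨0, hp⟩)⁻¹ := (Finset.sum_mul _ _ _).symm

lemma pairing_le_slope {p : ℕ} (hp : 0 < p) (lam : Fin p → ℝ) (hmono : Antitone lam)
    (hnonneg : ∀ j, 0 ≤ lam j) (hlam0 : 0 < lam ⟨0, hp⟩) (θ v : Fin p → ℝ)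
    (hθ : dualSlopeNorm lam θ ≤ 1) : ∑ j, θ j * v j ≤ slopeNorm lam v := by
  have hS0 : 0 ≤ slopeNorm lam v := slope_nonneg lam hnonneg v
  rcases eq_or_lt_of_le hS0 with h0 | hpos
  · have hv : ∀ i, v i = 0 := by
      intro i
      have h1 : lam ⟨0, hp⟩ * dsort v ⟨0, hp⟩ ≤ 0 := by
        rw [h0]
        exact Finset.single_le_sum (f := fun j => lam j * dsort v j)
          (fun j _ => mul_nonneg (hnonneg j) (dsort_nonneg v j)) (Finset.mem_univ _)
      have h2 := abs_le_dsort_zero hp v i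
      have h3 : dsort v ⟨0, hp⟩ ≤ 0 := by nlinarith [dsort_nonneg v (⟨0, hp⟩ : Fin p)]
      have := abs_nonneg (v i)
      exact abs_eq_zero.1 (le_antisymm (h2.trans h3) (abs_nonneg _))
    have : ∑ j, θ j * v j = 0 := by simp [hv]
    linarith
  · set S := slopeNorm lam v with hS
    have hmem : S⁻¹ * (∑ j, θ j * v j) ∈
        {x : ℝ | ∃ u : Fin p → ℝ, slopeNorm lam u ≤ 1 ∧ x = ∑ j, θ j * u j} := by
      refine ⟨S⁻¹ • v, ?_, ?_⟩
      · rw [slope_smul lam hmono (inv_pos.2 hpos)]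
        rw [inv_mul_cancel₀ hpos.ne']
      · rw [Finset.mul_sum]
        apply Finset.sum_congr rfl; intro j _
        simp [smul_eq_mul]
        ring
    have hle := le_csSup (dual_set_bddAbove hp lam hnonneg hlam0 θ) hmem
    have h7 : S⁻¹ * (∑ j, θ j * v j) ≤ 1 := hle.trans hθ
    have h5 : S * (S⁻¹ * (∑ j, θ j * v j)) ≤ S * 1 := mul_le_mul_of_nonneg_left h7 hpos.le
    have h6 : S * (S⁻¹ * (∑ j, θ j * v j)) = ∑ j, θ j * v j := by field_simp
    linarith

lemma real_sign_mul_self (x : ℝ) : Real.sign x * x = |x| := by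
  rcases lt_trichotomy x 0 with h | h | h
  · rw [Real.sign_of_neg h, abs_of_neg h]; ring
  · simp [h]
  · rw [Real.sign_of_pos h, abs_of_pos h]; ring

lemma real_sign_mul_le_abs (x t : ℝ) : Real.sign x * t ≤ |t| := by
  rcases lt_trichotomy x 0 with h | h | h
  · rw [Real.sign_of_neg h]; rw [neg_one_mul]; exact neg_le_abs t
  · simp [h, abs_nonneg]
  · rw [Real.sign_of_pos h, one_mul]; exact le_abs_self t

lemma exists_attain {p : ℕ} (lam : Fin p → ℝ) (hmono : Antitone lam)
    (hnonneg : ∀ j, 0 ≤ lam j) (v : Fin p → ℝ) :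
    ∃ θs : Fin p → ℝ, dualSlopeNorm lam θs ≤ 1 ∧ ∑ j, θs j * v j = slopeNorm lam v := by
  refine ⟨fun j => Real.sign (v j) * lam ((tauPerm v).symm j), ?_, ?_⟩
  · apply Real.sSup_le _ zero_le_one
    rintro x ⟨u, hu, rfl⟩
    calc ∑ j, (Real.sign (v j) * lam ((tauPerm v).symm j)) * u j
        ≤ ∑ j, lam ((tauPerm v).symm j) * |u j| := by
          apply Finset.sum_le_sum; intro j _
          have h1 : Real.sign (v j) * u j ≤ |u j| := real_sign_mul_le_abs _ _
          have h2 : 0 ≤ lam ((tauPerm v).symm j) := hnonneg _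
          nlinarith
      _ = ∑ k, lam ((tauPerm v).symm (tauPerm v k)) * |u (tauPerm v k)| :=
          (Equiv.sum_comp (tauPerm v) (fun j => lam ((tauPerm v).symm j) * |u j|)).symm
      _ = ∑ k, lam k * |u (tauPerm v k)| := by
          apply Finset.sum_congr rfl; intro k _; rw [Equiv.symm_apply_apply]
      _ ≤ slopeNorm lam u := key_rearr lam hmono u (tauPerm v)
      _ ≤ 1 := hu
  · calc ∑ j, (Real.sign (v j) * lam ((tauPerm v).symm j)) * v j
        = ∑ j, lam ((tauPerm v).symm j) * |v j| := by
          apply Finset.sum_congr rfl; intro j _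
          rw [← real_sign_mul_self (v j)]; ring
      _ = ∑ k, lam ((tauPerm v).symm (tauPerm v k)) * |v (tauPerm v k)| :=
          (Equiv.sum_comp (tauPerm v) (fun j => lam ((tauPerm v).symm j) * |v j|)).symm
      _ = ∑ k, lam k * dsort v k := by
          apply Finset.sum_congr rfl; intro k _
          rw [Equiv.symm_apply_apply, dsort_eq_tau]
      _ = slopeNorm lam v := rfl

lemma quad_nonneg (a b : ℝ) (hb : 0 ≤ b)
    (h : ∀ t : ℝ, 0 < t → t ≤ 1 → 0 ≤ t * a + t ^ 2 * b) : 0 ≤ a := by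
  by_contra ha
  push_neg at ha
  set t := min 1 (-a / (2 * (b + 1))) with ht
  have htpos : 0 < t := lt_min one_pos (div_pos (neg_pos.2 ha) (by linarith))
  have ht1 : t ≤ 1 := min_le_left _ _
  have h2 : t * (b + 1) ≤ -a / 2 := by
    have h3 : t ≤ -a / (2 * (b + 1)) := min_le_right _ _
    calc t * (b + 1) ≤ (-a / (2 * (b + 1))) * (b + 1) := by nlinarith
      _ = -a / 2 := by field_simp
  have h4 := h t htpos ht1
  nlinarith [mul_le_mul_of_nonneg_left h2 htpos.le, mul_pos htpos (neg_pos.2 ha), sq_nonneg t]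

lemma pair_sum {p n : ℕ} (M : Matrix (Fin p) (Fin n) ℝ) (θ : Fin p → ℝ) (x : Fin n → ℝ) :
    ∑ j, θ j * (M.mulVec x) j = ∑ i, (Mᵀ.mulVec θ) i * x i := by
  simp only [Matrix.mulVec, dotProduct, Matrix.transpose_apply,
    Finset.mul_sum, Finset.sum_mul]
  rw [Finset.sum_comm]
  apply Finset.sum_congr rfl; intro i _
  apply Finset.sum_congr rfl; intro j _
  ring

/-- strong duality between the Graph-Slope primal and dual problems:
if `θ̂` minimizes `(1/2)‖Dθ - y‖²` over the dual ball, then `β̂ = y - Dθ̂` minimizes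
the primal objective and the duality gap vanishes. -/
theorem statement_18 {n p : ℕ} (G : GraphOn n p) (hconn : G.toSimpleGraph.Connected)
    (lam : Fin p → ℝ) (hmono : Antitone lam) (hnonneg : ∀ j, 0 ≤ lam j) (hne : lam ≠ 0)
    (y : Fin n → ℝ) (θhat : Fin p → ℝ)
    (hθmem : dualSlopeNorm lam θhat ≤ 1)
    (hθ : IsMinOn (fun θ : Fin p → ℝ => (1 / 2) * (enorm2 (G.incTᵀ.mulVec θ - y)) ^ 2)
      {θ : Fin p → ℝ | dualSlopeNorm lam θ ≤ 1} θhat) :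
    IsMinOn (fun β : Fin n → ℝ =>
        (1 / 2) * (enorm2 (y - β)) ^ 2 + slopeNorm lam (G.incT.mulVec β))
      Set.univ (y - G.incTᵀ.mulVec θhat) ∧
    (1 / 2) * (enorm2 (y - (y - G.incTᵀ.mulVec θhat))) ^ 2 +
        slopeNorm lam (G.incT.mulVec (y - G.incTᵀ.mulVec θhat)) +
        (1 / 2) * (enorm2 (G.incTᵀ.mulVec θhat - y)) ^ 2 -
        (1 / 2) * (enorm2 y) ^ 2 = 0 := by
  classical
  have hp : 0 < p := by
    rcases Nat.eq_zero_or_pos p with h | h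
    · exact absurd (funext fun j => Fin.elim0 (h ▸ j)) hne
    · exact h
  have hlam0 : 0 < lam ⟨0, hp⟩ := by
    obtain ⟨j, hj⟩ : ∃ j, lam j ≠ 0 := by
      by_contra h; push_neg at h; exact hne (funext h)
    exact lt_of_lt_of_le ((hnonneg j).lt_of_ne (Ne.symm hj)) (hmono (by simp [Fin.le_def]))
  have esq : ∀ {m : ℕ} (w : Fin m → ℝ), enorm2 w ^ 2 = ∑ i, w i ^ 2 := fun w =>
    Real.sq_sqrt (Finset.sum_nonneg fun i _ => sq_nonneg _)
  set c : Fin n → ℝ := G.incTᵀ.mulVec θhat with hc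
  set βh : Fin n → ℝ := y - c with hβ
  set v : Fin p → ℝ := G.incT.mulVec βh with hv
  obtain ⟨θs, hθs1, hθs2⟩ := exists_attain lam hmono hnonneg v
  -- variational inequality
  set d : Fin n → ℝ := G.incTᵀ.mulVec (θs - θhat) with hd
  have hvar : 0 ≤ ∑ i, (c i - y i) * d i := by
    apply quad_nonneg _ (∑ i, d i ^ 2) (Finset.sum_nonneg fun i _ => sq_nonneg _)
    intro t ht0 ht1
    have hmemt : dualSlopeNorm lam (θhat + t • (θs - θhat)) ∈
        {x : ℝ | x ≤ 1} := by
      apply Real.sSup_le _ zero_le_one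
      rintro x ⟨u, hu, rfl⟩
      have hA : ∑ j, θhat j * u j ≤ 1 :=
        (le_csSup (dual_set_bddAbove hp lam hnonneg hlam0 θhat) ⟨u, hu, rfl⟩).trans hθmem
      have hB : ∑ j, θs j * u j ≤ 1 :=
        (le_csSup (dual_set_bddAbove hp lam hnonneg hlam0 θs) ⟨u, hu, rfl⟩).trans hθs1
      have hx : ∑ j, (θhat + t • (θs - θhat)) j * u j
          = (1 - t) * (∑ j, θhat j * u j) + t * (∑ j, θs j * u j) := by
        rw [Finset.mul_sum, Finset.mul_sum, ← Finset.sum_add_distrib]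
        apply Finset.sum_congr rfl; intro j _
        simp [smul_eq_mul]
        ring
      rw [hx]
      nlinarith
    have hmin := isMinOn_iff.mp hθ (θhat + t • (θs - θhat)) hmemt
    have hDt : G.incTᵀ.mulVec (θhat + t • (θs - θhat)) = fun i => c i + t * d i := by
      funext i
      rw [Matrix.mulVec_add, Matrix.mulVec_smul]
      simp [hc, hd, smul_eq_mul]
    rw [hDt] at hmin
    rw [esq, esq] at hmin
    have hexp : ∑ i, ((fun i => c i + t * d i) - y) i ^ 2
        = ∑ i, (c i - y i) ^ 2 + (t * (2 * ∑ i, (c i - y i) * d i)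
            + t ^ 2 * ∑ i, d i ^ 2) := by
      rw [Finset.mul_sum, Finset.mul_sum, Finset.mul_sum, ← Finset.sum_add_distrib,
        ← Finset.sum_add_distrib]
      apply Finset.sum_congr rfl; intro i _
      simp only [Pi.sub_apply]
      ring
    rw [hexp] at hmin
    have h0 : ∑ i, ((c - y) i) ^ 2 = ∑ i, (c i - y i) ^ 2 := by
      apply Finset.sum_congr rfl; intros; simp
    rw [h0] at hmin
    have hB : 0 ≤ t ^ 2 * ∑ i, d i ^ 2 :=
      mul_nonneg (sq_nonneg t) (Finset.sum_nonneg fun i _ => sq_nonneg _)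
    linarith [hmin, hB]
  -- convert hvar to the slope pairing
  have hpair : ∀ w : Fin p → ℝ, ∑ j, w j * v j = ∑ i, (G.incTᵀ.mulVec w) i * βh i :=
    fun w => pair_sum G.incT w βh
  have hcy : ∀ i, c i - y i = -βh i := by intro i; simp [hβ]
  have hvar2 : ∑ j, (θs j - θhat j) * v j ≤ 0 := by
    have h1 : ∑ i, (c i - y i) * d i = -∑ j, (θs - θhat) j * v j := by
      rw [hpair (θs - θhat), ← Finset.sum_neg_distrib]
      apply Finset.sum_congr rfl; intro i _
      rw [hcy i]; simp [hd]; ring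
    have h2 : ∑ j, (θs - θhat) j * v j = ∑ j, (θs j - θhat j) * v j := by
      apply Finset.sum_congr rfl; intros; simp
    linarith [hvar, h1.symm ▸ hvar, h2]
  have hkey : ∑ j, θhat j * v j = slopeNorm lam v := by
    have hle := pairing_le_slope hp lam hmono hnonneg hlam0 θhat v hθmem
    have hsplit : ∑ j, (θs j - θhat j) * v j
        = ∑ j, θs j * v j - ∑ j, θhat j * v j := by
      rw [← Finset.sum_sub_distrib]
      apply Finset.sum_congr rfl; intros; ring
    rw [hsplit, hθs2] at hvar2
    linarith
  -- slope v in terms of c, y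
  have hslope : slopeNorm lam v = ∑ i, c i * y i - ∑ i, c i ^ 2 := by
    rw [← hkey, hpair θhat, ← hc]
    rw [← Finset.sum_sub_distrib]
    apply Finset.sum_congr rfl; intro i _
    simp [hβ]
    ring
  have hyy : y - βh = c := by simp [hβ]
  constructor
  · rw [isMinOn_iff]
    intro β _
    show (1/2) * (enorm2 (y - βh)) ^ 2 + slopeNorm lam (G.incT.mulVec βh) ≤ _
    rw [hyy, esq, esq]
    have hge : ∑ j, θhat j * (G.incT.mulVec β) j ≤ slopeNorm lam (G.incT.mulVec β) :=
      pairing_le_slope hp lam hmono hnonneg hlam0 θhat _ hθmem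
    have heq : ∑ j, θhat j * (G.incT.mulVec β) j = ∑ i, c i * β i := by
      rw [pair_sum G.incT θhat β, ← hc]
    have hsq : 0 ≤ ∑ i, ((y i - β i) - c i) ^ 2 :=
      Finset.sum_nonneg fun i _ => sq_nonneg _
    have hexp2 : ∑ i, ((y i - β i) - c i) ^ 2
        = ∑ i, ((y - β) i) ^ 2 - 2 * ∑ i, c i * (y i - β i) + ∑ i, c i ^ 2 := by
      rw [Finset.mul_sum, ← Finset.sum_sub_distrib, ← Finset.sum_add_distrib]
      apply Finset.sum_congr rfl; intro i _
      simp only [Pi.sub_apply]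
      ring
    have hcb : ∑ i, c i * (y i - β i) = ∑ i, c i * y i - ∑ i, c i * β i := by
      rw [← Finset.sum_sub_distrib]
      apply Finset.sum_congr rfl; intro i _
      ring
    rw [hslope]
    linarith [hge, heq, hsq, hexp2, hcb]
  · rw [hyy, esq, esq, esq, hslope]
    have hexp3 : ∑ i, ((c - y) i) ^ 2
        = ∑ i, c i ^ 2 - 2 * ∑ i, c i * y i + ∑ i, y i ^ 2 := by
      rw [Finset.mul_sum, ← Finset.sum_sub_distrib, ← Finset.sum_add_distrib]
      apply Finset.sum_congr rfl; intro i _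
      simp only [Pi.sub_apply]
      ring
    rw [hexp3]
    ring
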